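/- If d > 0 satisfies w² = 1/d + 1/d² where w² = d² + 1/d² − 2cosθ with θ ∈ [0, π/4], then d³ − √2·d − 1 ≥ 0, and hence d ≥ 1.450405 > √2. -/

import Mathlib

/-- If `d > 0` satisfies `w² = 1/d + 1/d² where `w² = d² + 1/d² − 2 cos θ` with
`θ ∈ [0, π/4]`, then `d³ − √2·d − 1 ≥ 0`, hence `d ≥ 1.450405 > √2`. -/
theorem ptolemy_trapezoid_244 (d θ w : ℝ) (hd : 0 < d)
    (hθ0 : 0 ≤ θ) (hθ1 : θ ≤ Real.pi / 4)
    (hwdef : w ^ 2 = d ^ 2 + 1 / d ^ 2 - 2 * Real.cos θ)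
    (hcond : w ^ 2 = 1 / d + 1 / d ^ 2) :
    d ^ 3 - Real.sqrt 2 * d - 1 ≥ 0 ∧ d ≥ 1.450405 ∧ (1.450405 : ℝ) > Real.sqrt 2 := by
  have hs2 : Real.sqrt 2 ^ 2 = 2 := Real.sq_sqrt (by norm_num)
  have hs0 : (0:ℝ) ≤ Real.sqrt 2 := Real.sqrt_nonneg 2
  have hsu : Real.sqrt 2 < 1.4142136 := by
    nlinarith [hs2, hs0]
  have hcos : Real.cos θ ≥ Real.sqrt 2 / 2 := by
    have : Real.cos (Real.pi / 4) ≤ Real.cos θ := by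
      apply Real.cos_le_cos_of_nonneg_of_le_pi hθ0 ?_ hθ1
      linarith [Real.pi_le_four]
    rwa [Real.cos_pi_div_four] at this
  -- derive d^2 - 2 cos θ = 1/d
  have hdne : d ≠ 0 := ne_of_gt hd
  have key : d ^ 3 - 2 * Real.cos θ * d = 1 := by
    have h := hwdef.symm.trans hcond
    field_simp at h
    have h4 : d ^ 4 * (d ^ 3 - 2 * Real.cos θ * d - 1) = 0 := by linear_combination d ^ 3 * h
    have := mul_eq_zero.mp h4
    rcases this with h' | h'
    · exact absurd h' (pow_ne_zero 4 hdne)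
    · linarith
  have h1 : d ^ 3 - Real.sqrt 2 * d - 1 ≥ 0 := by
    nlinarith [key, hcos, hd.le]
  have h2 : d ≥ 1.450405 := by
    by_contra h
    push_neg at h
    nlinarith [h1, hd, hsu, hs0, sq_nonneg (d - 1.450405), sq_nonneg (d + 1.450405)]
  exact ⟨h1, h2, by nlinarith [hs2, hs0]⟩
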